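/- Let K = ℚ(√d) with d ≡ 2, 3 (mod 4) squarefree and p an inert prime. Let C ⊆ 𝔽_{p²}^N be a linear code, and let ρ : O_K^N → (O_K/pO_K)^N ≅ 𝔽_{p²}^N be componentwise reduction. If x ∈ ρ^{-1}(C⊥) and y ∈ ρ^{-1}(C), then b_{1/(2p)}(x, y) := (1/(2p)) Σ_{i=1}^N Tr_{K/ℚ}(xᵢyᵢ) ∈ ℤ. In particular, ρ^{-1}(C⊥) is contained in the dual lattice of (ρ^{-1}(C), b_{1/(2p)}). -/

import Mathlib

set_option synthInstance.maxHeartbeats 1000000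
set_option maxHeartbeats 1000000

open NumberField

lemma zc4 : (4 : ZMod 4) = 0 := rfl

lemma intCore (d a b c : ℤ) (hd : Squarefree d) (hd0 : d ≠ 0)
    (hdmod : d % 4 = 2 ∨ d % 4 = 3)
    (h : d * (a ^ 2 - 4 * c) = b ^ 2) : 2 ∣ a := by
  by_contra ha
  have hdb : d ∣ b := (hd.dvd_pow_iff_dvd two_ne_zero).mp ⟨_, h.symm⟩
  obtain ⟨e, rfl⟩ := hdb
  have h2 : a ^ 2 - 4 * c = d * e ^ 2 := by
    have h' : d * (a ^ 2 - 4 * c) = d * (d * e ^ 2) := by linear_combination h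
    exact mul_left_cancel₀ hd0 h'
  have h4 : ((a : ZMod 4)) ^ 2 = (d : ZMod 4) * (e : ZMod 4) ^ 2 := by
    have := congrArg (Int.cast : ℤ → ZMod 4) h2
    push_cast at this
    linear_combination this + (c : ZMod 4) * zc4
  obtain ⟨k, rfl⟩ : Odd a := Int.odd_iff.mpr (by omega)
  have hk : ((2 * k + 1 : ℤ) : ZMod 4) ^ 2 = 1 := by
    push_cast
    linear_combination ((k:ZMod 4)^2 + (k : ZMod 4)) * zc4
  rw [hk] at h4
  have hdz : (d : ZMod 4) = ((d % 4 : ℤ) : ZMod 4) := by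
    conv_lhs => rw [← Int.mul_ediv_add_emod d 4]
    push_cast
    linear_combination ((d/4 : ℤ) : ZMod 4) * zc4
  have hd23 : (d : ZMod 4) = 2 ∨ (d : ZMod 4) = 3 := by
    rcases hdmod with h' | h' <;> [left; right] <;> rw [hdz, h'] <;> norm_num
  rcases Int.even_or_odd e with ⟨f, rfl⟩ | ⟨f, rfl⟩
  · have : ((f + f : ℤ) : ZMod 4) ^ 2 = 0 := by
      push_cast
      linear_combination ((f : ZMod 4)^2) * zc4
    rw [this, mul_zero] at h4
    exact absurd h4 (by decide)
  · have : ((2 * f + 1 : ℤ) : ZMod 4) ^ 2 = 1 := by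
      push_cast
      linear_combination ((f:ZMod 4)^2 + (f : ZMod 4)) * zc4
    rw [this, mul_one] at h4
    rcases hd23 with h' | h' <;> rw [h'] at h4 <;> exact absurd h4 (by decide)


lemma traceEven (d : ℤ) (hd : Squarefree d) (hd1 : 1 < d)
    (hdmod : d % 4 = 2 ∨ d % 4 = 3)
    (K : Type*) [Field K] [NumberField K] (hrank : Module.finrank ℚ K = 2)
    (sqrtd : K) (hsqrtd : sqrtd ^ 2 = (d : K)) (z : 𝓞 K) :
    ∃ m : ℤ, Algebra.trace ℚ K (z : K) = 2 * m := by
  have hd0 : d ≠ 0 := by omega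
  have hnsq : ∀ c : ℚ, c ^ 2 ≠ (d : ℚ) := by
    intro c hc
    have hint : IsIntegral ℤ c := by
      refine ⟨Polynomial.X ^ 2 - Polynomial.C d, ?_, ?_⟩
      · apply Polynomial.monic_X_pow_sub_C _ two_ne_zero
      · rw [Polynomial.eval₂_sub, Polynomial.eval₂_pow, Polynomial.eval₂_X, Polynomial.eval₂_C,
          eq_intCast, hc]
        ring
    obtain ⟨m, rfl⟩ := IsIntegrallyClosed.isIntegral_iff.mp hint
    simp only [algebraMap_int_eq, eq_intCast] at hc
    have hm : m ^ 2 = d := by exact_mod_cast hc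
    have := hd m ⟨1, by rw [mul_one, ← hm]; ring⟩
    rcases Int.isUnit_iff.mp this with h | h <;> subst h <;> norm_num at hm <;> omega
  have li : LinearIndependent ℚ ![(1 : K), sqrtd] := by
    rw [LinearIndependent.pair_iff' one_ne_zero]
    intro a ha
    apply hnsq a
    have hsa : algebraMap ℚ K a = sqrtd := by
      rw [← ha, Algebra.algebraMap_eq_smul_one]
    apply (algebraMap ℚ K).injective
    rw [map_pow, hsa, hsqrtd]
    exact (map_intCast (algebraMap ℚ K) d).symm
  have hcard : Fintype.card (Fin 2) = Module.finrank ℚ K := by simp [hrank]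
  let B : Module.Basis (Fin 2) ℚ K := basisOfLinearIndependentOfCardEqFinrank li hcard
  have hB : ⇑B = ![(1 : K), sqrtd] := coe_basisOfLinearIndependentOfCardEqFinrank li hcard
  have hB0 : B 0 = 1 := by rw [hB]; rfl
  have hB1 : B 1 = sqrtd := by rw [hB]; rfl
  set q : ℚ := B.repr (z : K) 0 with hq
  set r : ℚ := B.repr (z : K) 1 with hr
  have hz : (z : K) = q • (1 : K) + r • sqrtd := by
    conv_lhs => rw [← B.sum_repr (z : K)]
    rw [Fin.sum_univ_two, hB0, hB1, ← hq, ← hr]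
  have hrepr : ∀ a b : ℚ, ∀ i, B.repr (a • (1 : K) + b • sqrtd) i = ![a, b] i := by
    intro a b i
    rw [← hB0, ← hB1]
    fin_cases i <;> simp [Module.Basis.repr_self, Finsupp.single_apply]
  have hss : sqrtd * sqrtd = (d : ℚ) • (1 : K) := by
    rw [← pow_two, hsqrtd, Algebra.smul_def, mul_one, map_intCast]
  have hzs : (z : K) * sqrtd = ((d : ℚ) * r) • (1 : K) + q • sqrtd := by
    rw [hz, add_mul, smul_mul_assoc, smul_mul_assoc, one_mul, hss]
    module
  have htrz : Algebra.trace ℚ K (z : K) = 2 * q := by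
    rw [Algebra.trace_eq_matrix_trace B, Matrix.trace, Fin.sum_univ_two]
    simp only [Matrix.diag_apply, Algebra.leftMulMatrix_eq_repr_mul, hB0, hB1, mul_one]
    rw [hzs, hz, hrepr, hrepr]
    simp; ring
  have htrzs : Algebra.trace ℚ K ((z : K) * sqrtd) = 2 * d * r := by
    have hzss : (z : K) * sqrtd * sqrtd
        = ((d : ℚ) * q) • (1 : K) + ((d : ℚ) * r) • sqrtd := by
      rw [hzs, add_mul, smul_mul_assoc, smul_mul_assoc, one_mul, hss]
      module
    rw [Algebra.trace_eq_matrix_trace B, Matrix.trace, Fin.sum_univ_two]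
    simp only [Matrix.diag_apply, Algebra.leftMulMatrix_eq_repr_mul, hB0, hB1, mul_one]
    rw [hzss, hzs, hrepr, hrepr]
    simp; ring
  have hnorm : Algebra.norm ℚ ((z : K)) = q ^ 2 - d * r ^ 2 := by
    rw [Algebra.norm_eq_matrix_det B, Matrix.det_fin_two]
    simp only [Algebra.leftMulMatrix_eq_repr_mul, hB0, hB1, mul_one]
    rw [hzs, hz, hrepr, hrepr, hrepr, hrepr]
    simp; ring
  have htz : IsIntegral ℤ (z : K) := z.isIntegral_coe
  have hts : IsIntegral ℤ sqrtd := by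
    refine ⟨Polynomial.X ^ 2 - Polynomial.C d, ?_, ?_⟩
    · apply Polynomial.monic_X_pow_sub_C _ two_ne_zero
    · rw [Polynomial.eval₂_sub, Polynomial.eval₂_pow, Polynomial.eval₂_X, Polynomial.eval₂_C,
        eq_intCast, hsqrtd]
      ring
  obtain ⟨a, ha⟩ := IsIntegrallyClosed.isIntegral_iff.mp (Algebra.isIntegral_trace (R := ℤ) (L := ℚ) htz)
  obtain ⟨b, hb⟩ := IsIntegrallyClosed.isIntegral_iff.mp
    (Algebra.isIntegral_trace (R := ℤ) (L := ℚ) (htz.mul hts))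
  obtain ⟨c, hc⟩ := IsIntegrallyClosed.isIntegral_iff.mp (Algebra.isIntegral_norm ℚ htz)
  rw [htrz, eq_intCast (algebraMap ℤ ℚ)] at ha
  rw [htrzs, eq_intCast (algebraMap ℤ ℚ)] at hb
  rw [hnorm, eq_intCast (algebraMap ℤ ℚ)] at hc
  have key : d * (a ^ 2 - 4 * c) = b ^ 2 := by
    have : ((d * (a ^ 2 - 4 * c) : ℤ) : ℚ) = ((b ^ 2 : ℤ) : ℚ) := by
      push_cast
      linear_combination (d : ℚ) * (2*q + a) * ha - 4 * (d:ℚ) * hc + (-(2*(d:ℚ)*r) - b) * hb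
    exact_mod_cast this
  obtain ⟨m, rfl⟩ := intCore d a b c hd hd0 hdmod key
  refine ⟨m, ?_⟩
  rw [htrz, ← ha]
  push_cast
  ring


/-- The dual code of a linear code `C ⊆ R^ι` with respect to the standard dot product. -/
def dualCode {R : Type*} [CommRing R] {ι : Type*} [Fintype ι]
    (C : Submodule R (ι → R)) : Submodule R (ι → R) where
  carrier := {x | ∀ y ∈ C, ∑ i, x i * y i = 0}
  zero_mem' := by intro y hy; simp
  add_mem' := by
    intro a b ha hb y hy
    simp only [Pi.add_apply, add_mul, Finset.sum_add_distrib, ha y hy, hb y hy, add_zero]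
  smul_mem' := by
    intro c a ha y hy
    simp only [Pi.smul_apply, smul_eq_mul, mul_assoc, ← Finset.mul_sum, ha y hy, mul_zero]

/-- Let `K = ℚ(√d)` with `d > 1` squarefree, `d ≡ 2` or `3 (mod 4)`, and let
`p` be a prime inert in `K`, so `𝒪_K/p𝒪_K ≅ 𝔽_{p²}`.  Let `C` be a linear code in
`(𝒪_K/p𝒪_K)^N` and `ρ` componentwise reduction mod `p𝒪_K`.  If `x ∈ ρ⁻¹(C⊥)` and
`y ∈ ρ⁻¹(C)` then `b_{1/(2p)}(x, y) = (1/(2p)) ∑ᵢ Tr_{K/ℚ}(xᵢ yᵢ) ∈ ℤ`; in particular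
`ρ⁻¹(C⊥)` is contained in the dual lattice of `(ρ⁻¹(C), b_{1/(2p)})`. -/
theorem statement10 (d : ℤ) (hd : Squarefree d) (hd1 : 1 < d)
    (hdmod : d % 4 = 2 ∨ d % 4 = 3)
    (K : Type*) [Field K] [NumberField K] (hrank : Module.finrank ℚ K = 2)
    (sqrtd : K) (hsqrtd : sqrtd ^ 2 = (d : K))
    (p : ℕ) (hp : p.Prime) (hinert : (Ideal.span {(p : 𝓞 K)}).IsPrime)
    (N : ℕ) (C : Submodule (𝓞 K ⧸ Ideal.span {(p : 𝓞 K)})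
      (Fin N → 𝓞 K ⧸ Ideal.span {(p : 𝓞 K)}))
    (x y : Fin N → 𝓞 K)
    (hx : (fun i => Ideal.Quotient.mk (Ideal.span {(p : 𝓞 K)}) (x i)) ∈ dualCode C)
    (hy : (fun i => Ideal.Quotient.mk (Ideal.span {(p : 𝓞 K)}) (y i)) ∈ C) :
    ∃ m : ℤ, (1 / (2 * (p : ℚ))) * ∑ i, Algebra.trace ℚ K ((x i : K) * (y i : K))
      = (m : ℚ) := by
  have hsum : Ideal.Quotient.mk (Ideal.span {(p : 𝓞 K)}) (∑ i, x i * y i) = 0 := by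
    rw [map_sum]
    simp_rw [map_mul]
    exact hx _ hy
  have hmem : (∑ i, x i * y i) ∈ Ideal.span {(p : 𝓞 K)} :=
    Ideal.Quotient.eq_zero_iff_mem.mp hsum
  obtain ⟨z, hz⟩ := Ideal.mem_span_singleton'.mp hmem
  obtain ⟨m, hm⟩ := traceEven d hd hd1 hdmod K hrank sqrtd hsqrtd z
  refine ⟨m, ?_⟩
  have hcast : ∑ i, ((x i : K) * (y i : K)) = (p : ℚ) • (z : K) := by
    have : ((∑ i, x i * y i : 𝓞 K) : K) = ((z * p : 𝓞 K) : K) := by rw [hz]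
    push_cast at this
    rw [this, Algebra.smul_def]
    push_cast
    ring
  rw [← map_sum, hcast, map_smul, hm]
  have hp0 : (p : ℚ) ≠ 0 := by exact_mod_cast hp.ne_zero
  field_simp
  ring
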